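/- Let (V, B) be a symplectic vector space over ℂ and let C be a nilpotent endomorphism of V that is skew-symmetric with respect to B. Then for every odd integer k ≥ 1, the number dim ker(C^{k-1}) + dim ker(C^{k+1}) is even; equivalently, every odd part of the Jordan partition of C occurs with even multiplicity, so the Jordan partition of C belongs to the set P₋₁(dim V) of partitions in which odd parts occur with even multiplicity. -/

import Mathlib

open Module LinearMap

universe u

lemma even_finrank_of_alt_nondeg :
    ∀ (n : ℕ) (V : Type u) [AddCommGroup V] [Module ℂ V] [FiniteDimensional ℂ V],
      finrank ℂ V = n → ∀ F : LinearMap.BilinForm ℂ V, F.IsAlt → F.Nondegenerate → Even n := by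
  intro n
  induction n using Nat.strong_induction_on with
  | _ n IH =>
    intro V _ _ _ hn F halt hnd
    rcases Nat.eq_zero_or_pos n with h0 | hpos
    · simp [h0]
    have : Nontrivial V := finrank_pos_iff.mp (hn ▸ hpos)
    obtain ⟨x, hx⟩ := exists_ne (0 : V)
    have hxy : ∃ y, F x y ≠ 0 := by
      by_contra h
      push_neg at h
      exact hx (hnd.1 x h)
    obtain ⟨y, hxy⟩ := hxy
    have hyx : F y x ≠ 0 := by
      intro h
      exact hxy (neg_eq_zero.mp ((LinearMap.IsAlt.neg halt x y).trans h))
    set W : Submodule ℂ V := Submodule.span ℂ {x, y} with hW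
    have hxW : x ∈ W := Submodule.subset_span (by simp)
    have hyW : y ∈ W := Submodule.subset_span (by simp)
    -- restriction to W is nondegenerate
    have hres : (F.restrict W).Nondegenerate := by
      refine (LinearMap.IsRefl.nondegenerate_iff_separatingLeft (fun a b h => halt.isRefl a.1 b.1 h)).mpr ?_
      intro z hz
      obtain ⟨a, b, hab⟩ := Submodule.mem_span_pair.mp z.2
      have h1 : a * F x x + b * F y x = 0 := by
        have := hz ⟨x, hxW⟩
        rw [LinearMap.BilinForm.restrict_apply, ← hab] at this
        simpa using this
      have h2 : a * F x y + b * F y y = 0 := by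
        have := hz ⟨y, hyW⟩
        rw [LinearMap.BilinForm.restrict_apply, ← hab] at this
        simpa using this
      rw [halt x, mul_zero, zero_add] at h1
      rw [halt y, mul_zero, add_zero] at h2
      have hb : b = 0 := by
        rcases mul_eq_zero.mp h1 with h | h
        · exact h
        · exact absurd h hyx
      have ha : a = 0 := by
        rcases mul_eq_zero.mp h2 with h | h
        · exact h
        · exact absurd h hxy
      exact Subtype.ext (by rw [← hab, ha, hb]; simp)
    have hcompl : IsCompl W (F.orthogonal W) :=
      F.isCompl_orthogonal_of_restrict_nondegenerate halt.isRefl hres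
    have hresO : (F.restrict (F.orthogonal W)).Nondegenerate := by
      refine (LinearMap.IsRefl.nondegenerate_iff_separatingLeft (fun a b h => halt.isRefl a.1 b.1 h)).mpr ?_
      intro z hz
      refine Subtype.ext (hnd.1 z.1 fun v => ?_)
      have hv : v ∈ W ⊔ F.orthogonal W := hcompl.sup_eq_top ▸ Submodule.mem_top
      obtain ⟨w, hw, u, hu, rfl⟩ := Submodule.mem_sup.mp hv
      have h1 : F z.1 w = 0 := halt.isRefl w z.1 (z.2 w hw)
      have h2 : F z.1 u = 0 := hz ⟨u, hu⟩
      simp [h1, h2]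
    have hdim : finrank ℂ W + finrank ℂ (F.orthogonal W) = n := by
      rw [← hn]; exact Submodule.finrank_add_eq_of_isCompl hcompl
    have hxyind : LinearIndependent ℂ ![x, y] := by
      rw [LinearIndependent.pair_iff]
      intro s t hst
      have h1 : s * F x x + t * F y x = 0 := by
        have : F (s • x + t • y) x = 0 := by rw [hst]; simp
        simpa using this
      rw [halt x, mul_zero, zero_add] at h1
      have ht : t = 0 := by
        rcases mul_eq_zero.mp h1 with h | h
        · exact h
        · exact absurd h hyx
      refine ⟨?_, ht⟩
      rw [ht, zero_smul, add_zero, smul_eq_zero] at hst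
      rcases hst with h | h
      · exact h
      · exact absurd h hx
    have hWdim : finrank ℂ W = 2 := by
      have := finrank_span_eq_card hxyind
      rwa [Matrix.range_cons_cons_empty, Fintype.card_fin] at this
    have hlt : finrank ℂ (F.orthogonal W) < n := by omega
    have hevenO : Even (finrank ℂ (F.orthogonal W)) :=
      IH _ hlt (F.orthogonal W) rfl (F.restrict (F.orthogonal W))
        (fun z => halt z.1) hresO
    obtain ⟨m, hm⟩ := hevenO
    exact ⟨m + 1, by omega⟩



/-- For a nilpotent skew-symmetric endomorphism of a symplectic vector
space over `ℂ`, for every odd `k ≥ 1` the number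
`dim ker (C^(k-1)) + dim ker (C^(k+1))` is even, i.e. odd parts of the Jordan
partition of `C` occur with even multiplicity. -/
theorem stmt5 {V : Type*} [AddCommGroup V] [Module ℂ V] [FiniteDimensional ℂ V]
    (B : LinearMap.BilinForm ℂ V) (hB : B.Nondegenerate)
    (hBalt : ∀ x y : V, B x y = - B y x)
    (C : V →ₗ[ℂ] V) (hCnil : IsNilpotent C)
    (hC : ∀ x y : V, B (C x) y = - B x (C y)) :
    ∀ k : ℕ, 1 ≤ k → Odd k →
      Even (Module.finrank ℂ (LinearMap.ker (C ^ (k - 1))) +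
        Module.finrank ℂ (LinearMap.ker (C ^ (k + 1)))) := by
  have hB0 : ∀ x : V, B x x = 0 := by
    intro x
    have := hBalt x x
    have h2 : (2 : ℂ) * B x x = 0 := by ring_nf; linear_combination this
    simpa using mul_eq_zero.mp h2
  have hmove : ∀ (j : ℕ) (x y : V), B ((C ^ j) x) y = (-1 : ℂ) ^ j * B x ((C ^ j) y) := by
    intro j
    induction j with
    | zero => intro x y; simp
    | succ j ih =>
      intro x y
      have h1 : (C ^ (j + 1)) x = (C ^ j) (C x) := by
        rw [pow_succ]; rfl
      have h2 : C ((C ^ j) y) = (C ^ (j + 1)) y := by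
        rw [pow_succ']; rfl
      rw [h1, ih (C x) y, hC x ((C ^ j) y), h2]
      ring
  -- key: for even m, finrank ker C^m ≡ finrank V (mod 2)
  have hkey : ∀ m : ℕ, Even m →
      Even (finrank ℂ (LinearMap.ker (C ^ m)) + finrank ℂ V) := by
    intro m hm
    set K := LinearMap.ker (C ^ m) with hK
    obtain ⟨W, hWc⟩ := Submodule.exists_isCompl K
    -- the alternating form on W
    set F : LinearMap.BilinForm ℂ V := B.compl₁₂ (C ^ m) LinearMap.id with hF
    have hFapp : ∀ x y : V, F x y = B ((C ^ m) x) y := fun x y => rfl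
    have hsign : (-1 : ℂ) ^ m = 1 := hm.neg_one_pow
    have halt : (F.restrict W).IsAlt := by
      intro z
      obtain ⟨j, hj⟩ := hm
      have hjj : (C ^ m) (z : V) = (C ^ j) ((C ^ j) (z : V)) := by
        rw [hj, ← Module.End.mul_apply, ← pow_add]
      show F (z : V) (z : V) = 0
      rw [hFapp, hjj, hmove j ((C ^ j) (z : V)) (z : V), hB0, mul_zero]
    have hnd : (F.restrict W).Nondegenerate := by
      refine (LinearMap.IsRefl.nondegenerate_iff_separatingLeft halt.isRefl).mpr ?_
      intro z hz
      have hall : ∀ v : V, B ((C ^ m) (z : V)) v = 0 := by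
        intro v
        have hv : v ∈ K ⊔ W := hWc.sup_eq_top ▸ Submodule.mem_top
        obtain ⟨k, hk, w, hw, rfl⟩ := Submodule.mem_sup.mp hv
        have hk0 : B ((C ^ m) (z : V)) k = 0 := by
          rw [hmove m (z : V) k, LinearMap.mem_ker.mp hk, map_zero, mul_zero]
        have hw0 : B ((C ^ m) (z : V)) w = 0 := hz ⟨w, hw⟩
        rw [map_add, hk0, hw0, add_zero]
      have hzK : (z : V) ∈ K := LinearMap.mem_ker.mpr (hB.1 _ hall)
      have : (z : V) ∈ K ⊓ W := ⟨hzK, z.2⟩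
      rw [hWc.inf_eq_bot] at this
      exact Subtype.ext this
    have hevenW : Even (finrank ℂ W) :=
      even_finrank_of_alt_nondeg (finrank ℂ W) W rfl (F.restrict W) halt hnd
    have hdim : finrank ℂ K + finrank ℂ W = finrank ℂ V :=
      Submodule.finrank_add_eq_of_isCompl hWc
    obtain ⟨a, ha⟩ := hevenW
    exact ⟨finrank ℂ K + a, by omega⟩
  intro k hk hodd
  obtain ⟨j, hj⟩ := hodd
  have h1 : Even (finrank ℂ (LinearMap.ker (C ^ (k - 1))) + finrank ℂ V) :=
    hkey (k - 1) ⟨j, by omega⟩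
  have h2 : Even (finrank ℂ (LinearMap.ker (C ^ (k + 1))) + finrank ℂ V) :=
    hkey (k + 1) ⟨j + 1, by omega⟩
  rw [Nat.even_iff] at h1 h2 ⊢
  omega
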